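/- arXiv:1805.09219 — 2 statements merged into one kernel-verified Lean document; each statement's English description precedes it below -/
import Mathlib

section
/- There exists L₀ = L₀(β, ψ) such that for all L ≥ L₀ and every connected interval I ⊆ B = B(−1/2−β), one has ∫_I log|f'(z)| dz ≥ |I| · log( L^{1−β} |I| ). -/
open MeasureTheory Set Filter Topology

noncomputable section

/-! ## Basic circle setup.
We parametrize `S¹ = ℝ/ℤ` by `[0,1)`.  Functions and subsets of `S¹` are represented by
1-periodic functions/subsets of `ℝ`. -/

/-- The circle distance on `ℝ/ℤ`, computed on representatives. -/
def dS1 (x y : ℝ) : ℝ := |x - y - (round (x - y) : ℝ)|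

/-- Circle distance from a point to a set (a subset of `ℝ`, viewed 1-periodically). -/
def dS1Set (x : ℝ) (A : Set ℝ) : ℝ := sInf (dS1 x '' A)

/-- The critical set `C'_ψ = {ψ' = 0}` as a subset of `ℝ`. -/
def Crit (ψ : ℝ → ℝ) : Set ℝ := {x : ℝ | deriv ψ x = 0}

/-- (H1): the critical set is finite (as a subset of `S¹ ≅ [0,1)`). -/
def H1 (ψ : ℝ → ℝ) : Prop := (Crit ψ ∩ Ico (0:ℝ) 1).Finite

/-- (H2): no degenerate critical points. -/
def H2 (ψ : ℝ → ℝ) : Prop := ∀ x ∈ Crit ψ, deriv (deriv ψ) x ≠ 0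

/-- (H4): `‖ψ'‖_{C⁰} ≤ 1/10` and `‖ψ''‖_{C⁰} ≤ 1/10`. -/
def H4 (ψ : ℝ → ℝ) : Prop :=
  (∀ x : ℝ, |deriv ψ x| ≤ 1 / 10) ∧ ∀ x : ℝ, |deriv (deriv ψ) x| ≤ 1 / 10

/-- Standing assumptions on `ψ`: 1-periodicity, `C²` smoothness, (H1), (H2). -/
def PsiReg (ψ : ℝ → ℝ) : Prop :=
  Function.Periodic ψ 1 ∧ ContDiff ℝ 2 ψ ∧ H1 ψ ∧ H2 ψ

/-- The constant `K₁ = K₁(ψ)` with `|ψ'(x)| ≥ K₁ d(x, C'_ψ)`. -/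
def K1hyp (ψ : ℝ → ℝ) (K₁ : ℝ) : Prop :=
  0 < K₁ ∧ ∀ x : ℝ, K₁ * dS1Set x (Crit ψ) ≤ |deriv ψ x|

/-- `‖ψ''‖_{C⁰}`. -/
def psiC2norm (ψ : ℝ → ℝ) : ℝ := ⨆ x : ℝ, |deriv (deriv ψ) x|

/-- The circle map `f = f_{L,a} = Lψ + a (mod 1)`, on representatives in `[0,1)`. -/
def cmap (ψ : ℝ → ℝ) (L a x : ℝ) : ℝ := Int.fract (L * ψ x + a)

/-- The random orbit `X_{n+1} = f_{ω_n}(X_n) = f(X_n + ω_n)` on `S¹ ≅ [0,1)`;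
`orbitW ψ L a ω x n = fⁿ_ω(x)`. -/
def orbitW (ψ : ℝ → ℝ) (L a : ℝ) (ω : ℕ → ℝ) (x : ℝ) : ℕ → ℝ
  | 0 => x
  | n + 1 => cmap ψ L a (orbitW ψ L a ω x n + ω n)

/-- Deterministic iterates `fⁿ(x)`. -/
def detIter (ψ : ℝ → ℝ) (L a x : ℝ) (n : ℕ) : ℝ := orbitW ψ L a (fun _ => 0) x n

/-- Condition `(H3)_{c,k}`: `d(fˡ(x̂), C'_ψ) ≥ c` for all `x̂ ∈ C'_ψ` and `1 ≤ l ≤ k`. -/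
def H3cond (ψ : ℝ → ℝ) (L a c : ℝ) (k : ℕ) : Prop :=
  ∀ x ∈ Crit ψ, ∀ l : ℕ, 1 ≤ l → l ≤ k → c ≤ dS1Set (detIter ψ L a x l) (Crit ψ)

/-- The lifted random orbit `X̃_{n+1} = f̃(X̃_n + ω_n) = Lψ(X̃_n + ω_n) + a` on `ℝ`;
`liftOrbit ψ L a ω x n = f̃ⁿ_ω(x)`. -/
def liftOrbit (ψ : ℝ → ℝ) (L a : ℝ) (ω : ℕ → ℝ) (x : ℝ) : ℕ → ℝ
  | 0 => x
  | n + 1 => L * ψ (liftOrbit ψ L a ω x n + ω n) + a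

/-- `|(fⁿ_ω)'(x)|`, computed by the chain rule (the mod-1 projection has derivative 1). -/
def derivAbs (ψ : ℝ → ℝ) (L a : ℝ) (ω : ℕ → ℝ) (x : ℝ) (n : ℕ) : ℝ :=
  ∏ i ∈ Finset.range n, |L * deriv ψ (orbitW ψ L a ω x i + ω i)|

/-- `log |(fⁿ_ω)'(x)|`. -/
def logDerivSum (ψ : ℝ → ℝ) (L a : ℝ) (ω : ℕ → ℝ) (x : ℝ) (n : ℕ) : ℝ :=
  ∑ i ∈ Finset.range n, Real.log |L * deriv ψ (orbitW ψ L a ω x i + ω i)|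

/-- `log |(f̃ⁿ_ω)'(x)|` along the lifted orbit. -/
def logDerivSumLift (ψ : ℝ → ℝ) (L a : ℝ) (ω : ℕ → ℝ) (x : ℝ) (n : ℕ) : ℝ :=
  ∑ i ∈ Finset.range n, Real.log |L * deriv ψ (liftOrbit ψ L a ω x i + ω i)|

/-- The (signed) derivative `(f̃ⁿ_ω)'(x)` of the lifted composition. -/
def derivLift (ψ : ℝ → ℝ) (L a : ℝ) (ω : ℕ → ℝ) (x : ℝ) (n : ℕ) : ℝ :=
  ∏ i ∈ Finset.range n, (L * deriv ψ (liftOrbit ψ L a ω x i + ω i))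

/-- The uniform distribution `ν^ε` on `[-ε, ε]`. -/
def unif (ε : ℝ) : Measure ℝ :=
  ENNReal.ofReal (1 / (2 * ε)) • volume.restrict (Icc (-ε) ε)

/-- `P = ν^{⊗ ℕ}`: the coordinates of `ω` are i.i.d. with law `ν` under `P`. -/
def IsProductOf (P : Measure (ℕ → ℝ)) (ν : Measure ℝ) : Prop :=
  IsProbabilityMeasure P ∧
    ∀ (s : Finset ℕ) (A : ℕ → Set ℝ), (∀ i, MeasurableSet (A i)) →
      P {ω : ℕ → ℝ | ∀ i ∈ s, ω i ∈ A i} = ∏ i ∈ s, ν (A i)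

/-- A stationary probability measure for the Markov chain `X_{n+1} = f(X_n + ω_n)` on
`S¹ ≅ [0,1)`. -/
def IsStationaryS1 (ψ : ℝ → ℝ) (L a ε : ℝ) (μ : Measure ℝ) : Prop :=
  IsProbabilityMeasure μ ∧ μ (Ico (0:ℝ) 1) = 1 ∧
    ∀ A : Set ℝ, MeasurableSet A →
      μ A = ∫⁻ x, unif ε {w : ℝ | cmap ψ L a (x + w) ∈ A} ∂μ

/-- `μ` is supported on all of `S¹`. -/
def FullSupport (μ : Measure ℝ) : Prop :=
  ∀ U : Set ℝ, IsOpen U → (U ∩ Ico (0:ℝ) 1).Nonempty → 0 < μ U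

/-- The neighborhood `B(η) = {x : d(x, C'_ψ) ≤ K₁⁻¹ L^η}` of the critical set. -/
def Bset (ψ : ℝ → ℝ) (K₁ L η : ℝ) : Set ℝ := {x : ℝ | dS1Set x (Crit ψ) ≤ K₁⁻¹ * L ^ η}

/-- `G = S¹ ∖ B(-β)`. -/
def Gset (ψ : ℝ → ℝ) (K₁ L β : ℝ) : Set ℝ := (Bset ψ K₁ L (-β))ᶜ

/-- `B^l` for `0 ≤ l ≤ k` (`B⁰ = I`). -/
def BlSet (ψ : ℝ → ℝ) (K₁ L β : ℝ) (k l : ℕ) : Set ℝ :=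
  if l = k then Bset ψ K₁ L (-(k : ℝ) / 2 - β)
  else Bset ψ K₁ L (-(l : ℝ) / 2 - β) \ Bset ψ K₁ L (-((l : ℝ) + 1) / 2 - β)

/-- The shifted set `A_w = A - w`. -/
def shiftSet (A : Set ℝ) (w : ℝ) : Set ℝ := {x : ℝ | x + w ∈ A}
/-! ## The partition `R` into connected components of `G, B⁰, …, B^k`. -/

open scoped Classical in
/-- The element of `{G, B⁰, …, B^k}` containing `x`. -/
def pieceOf (ψ : ℝ → ℝ) (K₁ L β : ℝ) (k : ℕ) (x : ℝ) : Set ℝ :=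
  if x ∈ Gset ψ K₁ L β then Gset ψ K₁ L β
  else if h : ∃ l : ℕ, l ≤ k ∧ x ∈ BlSet ψ K₁ L β k l then BlSet ψ K₁ L β k h.choose
  else ∅

/-- The atom of the partition `R` containing `x`: the connected component of the piece of
`{G, B⁰, …, B^k}` containing `x`. -/
def atomR (ψ : ℝ → ℝ) (K₁ L β : ℝ) (k : ℕ) (x : ℝ) : Set ℝ :=
  connectedComponentIn (pieceOf ψ K₁ L β k x) x

/-- Length of a subset of `ℝ`. -/
def sLen (S : Set ℝ) : ℝ := (volume S).toReal

/-- The atom of the shifted partition `R_w` containing `z`. -/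
def atomRshift (ψ : ℝ → ℝ) (K₁ L β : ℝ) (k : ℕ) (w z : ℝ) : Set ℝ :=
  {t : ℝ | t + w ∈ atomR ψ K₁ L β k (z + w)}

/-- `J` is a longest atom of `R_w` restricted to `Jbar`. -/
def IsLongestAtom (ψ : ℝ → ℝ) (K₁ L β : ℝ) (k : ℕ) (w : ℝ) (Jbar J : Set ℝ) : Prop :=
  (∃ z ∈ Jbar, J = atomRshift ψ K₁ L β k w z ∩ Jbar) ∧
    ∀ z ∈ Jbar, sLen (atomRshift ψ K₁ L β k w z ∩ Jbar) ≤ sLen J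

/-- The random interval process `(J_i, J̄_i)` of Section 3.2:
`J₀ = X₀ + [-ε,ε]`, `J̄₁ = f̃(J₀)`, and for `i ≥ 1`, `J_i` is a longest atom of `R_{ω_i}|_{J̄_i}`
and `J̄_{i+1} = f̃_{ω_i}(J_i)`. -/
def IntervalProc (ψ : ℝ → ℝ) (L a K₁ β ε : ℝ) (k : ℕ) (X₀ : ℝ) (ω : ℕ → ℝ)
    (J Jbar : ℕ → Set ℝ) : Prop :=
  J 0 = Icc (X₀ - ε) (X₀ + ε) ∧
    Jbar 1 = (fun x : ℝ => L * ψ x + a) '' J 0 ∧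
    ∀ i : ℕ, 1 ≤ i →
      IsLongestAtom ψ K₁ L β k (ω i) (Jbar i) (J i) ∧
        Jbar (i + 1) = (fun x : ℝ => L * ψ (x + ω i) + a) '' J i

/-! ## The partition `𝒫` of Section 4.1 and the merged partitions `𝒫_ω(I)`. -/

/-- A partition `𝒫` of `S¹` (regarded 1-periodically on `ℝ`) as in Section 4.1(A):
atoms are intervals subordinate to `{G, B⁰, …, B^k}`; on `G` and `B^k` the atoms are the
connected components, and each component of `B^l` (`l < k`) is divided into intervals of
length in `[(l+1)⁻² L^{-(l+3)/2-β}, 2(l+1)⁻² L^{-(l+3)/2-β}]`. -/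
structure GoodPartition (ψ : ℝ → ℝ) (K₁ L β : ℝ) (k : ℕ) (PP : Set (Set ℝ)) : Prop where
  nonempty : ∀ C ∈ PP, C.Nonempty
  interval : ∀ C ∈ PP, C.OrdConnected
  disj : PP.PairwiseDisjoint id
  cover : ⋃₀ PP = univ
  periodic : ∀ C ∈ PP, (fun x : ℝ => x + 1) '' C ∈ PP
  subordinate : ∀ C ∈ PP, C ⊆ Gset ψ K₁ L β ∨ ∃ l ≤ k, C ⊆ BlSet ψ K₁ L β k l
  g_atoms : ∀ C ∈ PP, C ⊆ Gset ψ K₁ L β → ∀ x ∈ C,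
    C = connectedComponentIn (Gset ψ K₁ L β) x
  bk_atoms : ∀ C ∈ PP, C ⊆ BlSet ψ K₁ L β k k → ∀ x ∈ C,
    C = connectedComponentIn (BlSet ψ K₁ L β k k) x
  bl_len : ∀ C ∈ PP, ∀ l : ℕ, l < k → C ⊆ BlSet ψ K₁ L β k l →
    (((l : ℝ) + 1) ^ 2)⁻¹ * L ^ (-((l : ℝ) + 3) / 2 - β) ≤ sLen C ∧
      sLen C ≤ 2 * (((l : ℝ) + 1) ^ 2)⁻¹ * L ^ (-((l : ℝ) + 3) / 2 - β)

/-- The non-singleton atoms of the shifted partition `𝒫_w` restricted to `I`. -/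
def restAtoms (PP : Set (Set ℝ)) (w : ℝ) (I : Set ℝ) : Set (Set ℝ) :=
  {A : Set ℝ | (∃ C ∈ PP, A = ((fun x : ℝ => x - w) '' C) ∩ I) ∧ A.Nontrivial}

/-- `A` lies (weakly) to the left of `B`. -/
def setBefore (A B : Set ℝ) : Prop := ∀ a ∈ A, ∀ b ∈ B, a ≤ b

/-- `A` is one of the two leftmost members of `𝒜`. -/
def TwoLeft (𝒜 : Set (Set ℝ)) (A : Set ℝ) : Prop :=
  A ∈ 𝒜 ∧ {B ∈ 𝒜 | B ≠ A ∧ setBefore B A}.Subsingleton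

/-- `A` is one of the two rightmost members of `𝒜`. -/
def TwoRight (𝒜 : Set (Set ℝ)) (A : Set ℝ) : Prop :=
  A ∈ 𝒜 ∧ {B ∈ 𝒜 | B ≠ A ∧ setBefore A B}.Subsingleton

/-- `𝒜` has at least four members. -/
def AtLeastFour (𝒜 : Set (Set ℝ)) : Prop :=
  ∃ s : Finset (Set ℝ), ↑s ⊆ 𝒜 ∧ s.card = 4

/-- `S` is an atom of the merged partition `𝒫_w(I)` (whose atoms `𝒜 = restAtoms PP w I`
are merged at the two ends, and which is trivial if `N ≤ 3`). -/
def MergedAtom (𝒜 : Set (Set ℝ)) (I S : Set ℝ) : Prop :=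
  (¬ AtLeastFour 𝒜 ∧ S = I) ∨
    (AtLeastFour 𝒜 ∧
      ((∃ A B : Set ℝ, A ∈ 𝒜 ∧ B ∈ 𝒜 ∧ A ≠ B ∧ TwoLeft 𝒜 A ∧ TwoLeft 𝒜 B ∧ S = A ∪ B) ∨
        (∃ A B : Set ℝ, A ∈ 𝒜 ∧ B ∈ 𝒜 ∧ A ≠ B ∧ TwoRight 𝒜 A ∧ TwoRight 𝒜 B ∧ S = A ∪ B) ∨
        (S ∈ 𝒜 ∧ ¬ TwoLeft 𝒜 S ∧ ¬ TwoRight 𝒜 S)))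

/-! ## Itineraries (Section 4.1(B),(C)). -/

/-- The image `f̃ʲ_ω(A)`. -/
def Fim (ψ : ℝ → ℝ) (L a : ℝ) (ω : ℕ → ℝ) (j : ℕ) (A : Set ℝ) : Set ℝ :=
  (fun x : ℝ => liftOrbit ψ L a ω x j) '' A

/-- `C 0 ⊇ C 1 ⊇ ⋯ ⊇ C n` is a chain of itinerary atoms: `C i ∈ 𝒬_i` for `i ≤ n`. -/
def AtomChain (ψ : ℝ → ℝ) (L a : ℝ) (PP : Set (Set ℝ)) (ω : ℕ → ℝ) (I : Set ℝ)
    (n : ℕ) (C : ℕ → Set ℝ) : Prop :=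
  MergedAtom (restAtoms PP (ω 0) I) I (C 0) ∧
    ∀ i : ℕ, i < n →
      ∃ S : Set ℝ,
        MergedAtom (restAtoms PP (ω (i + 1)) (Fim ψ L a ω (i + 1) (C i)))
            (Fim ψ L a ω (i + 1) (C i)) S ∧
          C (i + 1) = C i ∩ (fun x : ℝ => liftOrbit ψ L a ω x (i + 1)) ⁻¹' S

/-- `τ ≥ n` on the chain `C`: no near-visit to `B^k` before time `n`. -/
def ChainTauGE (ψ : ℝ → ℝ) (K₁ L a β : ℝ) (k : ℕ) (ω : ℕ → ℝ) (C : ℕ → Set ℝ)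
    (n : ℕ) : Prop :=
  ∀ i : ℕ, i < n → Fim ψ L a ω i (C i) ∩ shiftSet (BlSet ψ K₁ L β k k) (ω i) = ∅

/-- The chain `C` is bound at time `t`: `t ∈ [t_j + 1, t_j + p_j]` for some bound period. -/
def ChainBoundAt (ψ : ℝ → ℝ) (K₁ L a β : ℝ) (k : ℕ) (ω : ℕ → ℝ) (C : ℕ → Set ℝ)
    (t : ℕ) : Prop :=
  ∃ s : ℕ, s < t ∧ ∃ l : ℕ, 1 ≤ l ∧ l ≤ k ∧
    (Fim ψ L a ω s (C s) ∩ shiftSet (BlSet ψ K₁ L β k l) (ω s)).Nonempty ∧ t ≤ s + l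

/-! ## The supporting interval process `(I_n)` of Section 5.1. -/

open scoped Classical in
/-- The shift used when mapping `I_n` forward: `0` if `I_n` is a fresh noise interval
(`n = 0` or `n - 1` was a near-visit to `B^k`), and `ω_n` otherwise. -/
def stepShift (ψ : ℝ → ℝ) (K₁ L β : ℝ) (k : ℕ) (ω : ℕ → ℝ) (I : ℕ → Set ℝ) : ℕ → ℝ
  | 0 => 0
  | n + 1 =>
    if (I n ∩ shiftSet (BlSet ψ K₁ L β k k) (ω n)).Nonempty then 0 else ω (n + 1)

/-- The supporting interval process `(I_n)` of Section 5.1: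
`I₀ = X̃₀ + [-ε,ε]`; if `I_n` meets `B^k_{ω_n}` then `I_{n+1} = X̃_{n+1} + [-ε,ε]`, and
otherwise `I_{n+1}` is the atom of `𝒫_{ω_{n+1}}(f̃_{(·)}(I_n))` containing `X̃_{n+1}`. -/
def SuppProc (ψ : ℝ → ℝ) (L a K₁ β ε : ℝ) (k : ℕ) (PP : Set (Set ℝ)) (X₀ : ℝ)
    (ω : ℕ → ℝ) (I : ℕ → Set ℝ) : Prop :=
  I 0 = Icc (X₀ - ε) (X₀ + ε) ∧
    ∀ n : ℕ,
      ((I n ∩ shiftSet (BlSet ψ K₁ L β k k) (ω n)).Nonempty →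
          I (n + 1) =
            Icc (liftOrbit ψ L a ω X₀ (n + 1) - ε) (liftOrbit ψ L a ω X₀ (n + 1) + ε)) ∧
      (¬ (I n ∩ shiftSet (BlSet ψ K₁ L β k k) (ω n)).Nonempty →
          MergedAtom
              (restAtoms PP (ω (n + 1))
                ((fun x : ℝ => L * ψ (x + stepShift ψ K₁ L β k ω I n) + a) '' I n))
              ((fun x : ℝ => L * ψ (x + stepShift ψ K₁ L β k ω I n) + a) '' I n)
              (I (n + 1)) ∧
            liftOrbit ψ L a ω X₀ (n + 1) ∈ I (n + 1))

/-- `τ_j = m` for the supporting interval process: `I_m` meets `B^k_{ω_m}`, `m ≥ 1`, and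
exactly `j - 1` earlier positive times do so. -/
def TauEq (ψ : ℝ → ℝ) (K₁ L β : ℝ) (k : ℕ) (ω : ℕ → ℝ) (I : ℕ → Set ℝ)
    (j m : ℕ) : Prop :=
  0 < m ∧ (I m ∩ shiftSet (BlSet ψ K₁ L β k k) (ω m)).Nonempty ∧
    ∃ s : Finset ℕ,
      (∀ i : ℕ, i ∈ s ↔
        (0 < i ∧ i < m ∧ (I i ∩ shiftSet (BlSet ψ K₁ L β k k) (ω i)).Nonempty)) ∧
      s.card = j - 1
section Lemma63Aux

open Real MeasureTheory Set

noncomputable def Flog (x : ℝ) : ℝ := x * Real.log x - x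

lemma Flog_cont : Continuous Flog := Real.continuous_mul_log.sub continuous_id

lemma Flog_hasDeriv {x : ℝ} (hx : x ≠ 0) : HasDerivAt Flog (Real.log x) x := by
  exact ((Real.hasDerivAt_mul_log hx).sub (hasDerivAt_id x)).congr_deriv (add_sub_cancel_right _ _)

lemma Flog_neg (x : ℝ) : Flog (-x) = -Flog x := by
  simp only [Flog, Real.log_neg_eq_log]; ring

lemma integrableOn_log_Ioc01 : IntegrableOn Real.log (Set.Ioc (0:ℝ) 1) := by
  have hb : IntegrableOn (fun x : ℝ => 2 * x ^ (-(1/2) : ℝ)) (Set.Ioc (0:ℝ) 1) := by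
    have h := (intervalIntegral.intervalIntegrable_rpow' (a := 0) (b := 1)
      (by norm_num : (-1:ℝ) < -(1/2))).const_mul (2:ℝ)
    rwa [intervalIntegrable_iff_integrableOn_Ioc_of_le (by norm_num : (0:ℝ) ≤ 1)] at h
  refine hb.mono' Real.measurable_log.aestronglyMeasurable ?_
  filter_upwards [ae_restrict_mem measurableSet_Ioc] with x hx
  have hx0 : 0 < x := hx.1
  have hy : 0 < x ^ (-(1/2):ℝ) := Real.rpow_pos_of_pos hx0 _
  have h1 : Real.log (x ^ (-(1/2):ℝ)) = -(1/2) * Real.log x := Real.log_rpow hx0 _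
  have h2 : Real.log (x ^ (-(1/2):ℝ)) ≤ x ^ (-(1/2):ℝ) - 1 := Real.log_le_sub_one_of_pos hy
  have h3 : Real.log x ≤ 0 := Real.log_nonpos hx0.le hx.2
  rw [Real.norm_eq_abs, abs_of_nonpos h3]
  nlinarith

lemma intervalIntegrable_log' (a b : ℝ) : IntervalIntegrable Real.log volume a b := by
  have H : ∀ c : ℝ, 0 ≤ c → IntervalIntegrable Real.log volume 0 c := by
    intro c hc
    rw [intervalIntegrable_iff_integrableOn_Ioc_of_le hc]
    rcases le_total c 1 with h1 | h1
    · exact integrableOn_log_Ioc01.mono_set (Set.Ioc_subset_Ioc le_rfl h1)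
    · have h2 : IntegrableOn Real.log (Set.Ioc (1:ℝ) c) := by
        have : ContinuousOn Real.log (Set.Icc (1:ℝ) c) :=
          Real.continuousOn_log.mono (by intro x hx; simp; nlinarith [hx.1])
        exact this.integrableOn_Icc.mono_set Set.Ioc_subset_Icc_self
      have : Set.Ioc (0:ℝ) c = Set.Ioc (0:ℝ) 1 ∪ Set.Ioc (1:ℝ) c := (Set.Ioc_union_Ioc_eq_Ioc (by norm_num) h1).symm
      rw [this]
      exact integrableOn_log_Ioc01.union h2
  have H' : ∀ c : ℝ, IntervalIntegrable Real.log volume 0 c := by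
    intro c
    rcases le_total 0 c with hc | hc
    · exact H c hc
    · have h1 : IntervalIntegrable Real.log volume 0 (-c) := H (-c) (by linarith)
      have h2 : (fun x : ℝ => Real.log (-x)) = Real.log := funext fun x => Real.log_neg_eq_log x
      rw [IntervalIntegrable.iff_comp_neg, h2, neg_zero]
      exact h1
  exact (H' a).symm.trans (H' b)

lemma integral_log_eq : ∀ u v : ℝ, u ≤ v → ∫ t in u..v, Real.log t = Flog v - Flog u := by
  have case1 : ∀ u v : ℝ, 0 ≤ u → u ≤ v → ∫ t in u..v, Real.log t = Flog v - Flog u := by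
    intro u v h0 huv
    refine intervalIntegral.integral_eq_sub_of_hasDeriv_right_of_le huv
      Flog_cont.continuousOn (fun x hx => ?_) (intervalIntegrable_log' u v)
    exact (Flog_hasDeriv (by nlinarith [hx.1] : x ≠ 0)).hasDerivWithinAt
  intro u v huv
  rcases le_total 0 u with h0 | h0
  · exact case1 u v h0 huv
  rcases le_total v 0 with hv | hv
  · have h1 : (∫ t in u..v, Real.log t) = ∫ t in u..v, Real.log (-t) := by
      simp [Real.log_neg_eq_log]
    rw [h1, intervalIntegral.integral_comp_neg fun t => Real.log t,
      case1 (-v) (-u) (by linarith) (by linarith), Flog_neg, Flog_neg]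
    ring
  · rw [← intervalIntegral.integral_add_adjacent_intervals
      (intervalIntegrable_log' u 0) (intervalIntegrable_log' 0 v)]
    have h1 : (∫ t in u..(0:ℝ), Real.log t) = Flog 0 - Flog u := by
      have h2 : (∫ t in u..(0:ℝ), Real.log t) = ∫ t in u..(0:ℝ), Real.log (-t) := by
        simp [Real.log_neg_eq_log]
      rw [h2, intervalIntegral.integral_comp_neg fun t => Real.log t, neg_zero,
        case1 0 (-u) le_rfl (by linarith), Flog_neg]
      simp [Flog]
    rw [h1, case1 0 v le_rfl hv]
    ring

lemma Flog_diff_ge {h : ℝ} (hh : 0 < h) (w : ℝ) :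
    h * Real.log (h / 2) - h ≤ Flog (w + h) - Flog w := by
  set g : ℝ → ℝ := fun w => Flog (w + h) - Flog w with hg
  have hgcont : Continuous g := (Flog_cont.comp (continuous_id.add continuous_const)).sub Flog_cont
  have hderiv : ∀ x : ℝ, x ≠ 0 → x + h ≠ 0 →
      HasDerivAt g (Real.log (x + h) - Real.log x) x := by
    intro x hx0 hxh
    have h1 : HasDerivAt (fun w : ℝ => Flog (w + h)) (Real.log (x + h)) x := by
      exact ((Flog_hasDeriv hxh).comp x ((hasDerivAt_id x).add_const h)).congr_deriv (mul_one _)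
    exact h1.sub (Flog_hasDeriv hx0)
  have mono1 : MonotoneOn g (Set.Icc (-(h/2)) 0) := by
    refine monotoneOn_of_hasDerivWithinAt_nonneg (convex_Icc _ _) hgcont.continuousOn
      (f' := fun x => Real.log (x + h) - Real.log x) (fun x hx => ?_) (fun x hx => ?_)
    · rw [interior_Icc] at hx
      exact (hderiv x (by nlinarith [hx.2] : x ≠ 0)
        (by nlinarith [hx.1] : x + h ≠ 0)).hasDerivWithinAt
    · rw [interior_Icc] at hx
      show 0 ≤ Real.log (x + h) - Real.log x
      have h2 : Real.log (-x) ≤ Real.log (x + h) := by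
        apply (Real.log_le_log_iff (by nlinarith [hx.2]) (by nlinarith [hx.1])).mpr
        nlinarith [hx.1]
      rw [← Real.log_neg_eq_log x]
      linarith
  have mono2 : MonotoneOn g (Set.Ici (0:ℝ)) := by
    refine monotoneOn_of_hasDerivWithinAt_nonneg (convex_Ici _) hgcont.continuousOn
      (f' := fun x => Real.log (x + h) - Real.log x) (fun x hx => ?_) (fun x hx => ?_)
    · rw [interior_Ici] at hx
      exact (hderiv x (ne_of_gt hx) (by nlinarith [Set.mem_Ioi.mp hx] : x + h ≠ 0)).hasDerivWithinAt
    · rw [interior_Ici] at hx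
      show 0 ≤ Real.log (x + h) - Real.log x
      have h2 : Real.log x ≤ Real.log (x + h) := by
        apply (Real.log_le_log_iff hx (by nlinarith [Set.mem_Ioi.mp hx])).mpr
        linarith
      linarith
  have key : ∀ w : ℝ, -(h/2) ≤ w → g (-(h/2)) ≤ g w := by
    intro w hw
    rcases le_total w 0 with hw0 | hw0
    · exact mono1 ⟨le_rfl, by linarith⟩ ⟨hw, hw0⟩ hw
    · exact le_trans (mono1 ⟨le_rfl, by linarith⟩ ⟨by linarith, le_rfl⟩ (by linarith))
        (mono2 Set.self_mem_Ici hw0 hw0)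
  have hgval : g (-(h/2)) = h * Real.log (h/2) - h := by
    have : -(h/2) + h = h/2 := by ring
    rw [hg]
    simp only [this]
    rw [show (-(h/2)) = -(h/2) by rfl, Flog_neg (h/2)]
    simp [Flog]
    ring
  rcases le_total (-(h/2)) w with hw | hw
  · have := key w hw
    rw [hgval] at this
    exact this
  · have hw' : -(h/2) ≤ -h - w := by linarith
    have := key (-h - w) hw'
    rw [hgval] at this
    have heq : g (-h - w) = g w := by
      rw [hg]
      simp only []
      have e1 : -h - w + h = -w := by ring
      rw [e1, show -h - w = -(h + w) by ring, Flog_neg, Flog_neg, show h + w = w + h by ring]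
      ring
    rw [heq] at this
    exact this

end Lemma63Aux

section Lemma63Geo

open Real MeasureTheory Set

lemma dS1_le_abs (x y : ℝ) : dS1 x y ≤ |x - y| := by
  unfold dS1
  rcases le_or_gt (1/2) |x - y| with h | h
  · exact (abs_sub_round (x - y)).trans h
  · obtain ⟨h1, h2⟩ := abs_lt.mp h
    have : round (x - y) = 0 := round_eq_zero_iff.mpr ⟨by linarith, by linarith⟩
    simp [this]

lemma deriv_periodic_one (ψ : ℝ → ℝ) (hper : Function.Periodic ψ 1) :
    Function.Periodic (deriv ψ) 1 := by
  intro x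
  have h1 : deriv (fun y => ψ (y + 1)) x = deriv ψ (x + 1) := deriv_comp_add_const ψ 1 x
  rw [← h1]
  congr 1
  exact hper.funext

lemma crit_shift (ψ : ℝ → ℝ) (hper : Function.Periodic ψ 1) (a : ℝ) (ha : a ∈ Crit ψ)
    (n : ℤ) : a + (n : ℝ) ∈ Crit ψ := by
  have hp := (deriv_periodic_one ψ hper).int_mul n
  have h2 := hp a
  simp only [mul_one] at h2
  simpa only [Crit, Set.mem_setOf_eq, h2] using ha

end Lemma63Geo

/-- **Lemma 6.3** (integral lower bound on `B`).  There is `L₀ = L₀(β,ψ)` such that for all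
`L ≥ L₀` and every connected interval `I ⊆ B = B(-1/2-β)`:
`∫_I log|f'(z)| dz ≥ |I| log(L^{1-β}|I|)`. -/
theorem lemma_integral (ψ : ℝ → ℝ) (hψ : PsiReg ψ) (hH4 : H4 ψ)
    (K₁ : ℝ) (hK1 : K1hyp ψ K₁) (β : ℝ) (hβ : β ∈ Ioo (0:ℝ) (1 / 100)) :
    ∃ L₀ : ℝ, 0 < L₀ ∧ ∀ L : ℝ, L₀ ≤ L →
      ∀ I : Set ℝ, IsConnected I → I ⊆ Bset ψ K₁ L (-(1:ℝ) / 2 - β) →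
        sLen I * Real.log (L ^ ((1:ℝ) - β) * sLen I) ≤
          ∫ z in I, Real.log |L * deriv ψ z| := by
  obtain ⟨hper, hC2, hH1, _hH2⟩ := hψ
  obtain ⟨hK1pos, hK1le⟩ := hK1
  obtain ⟨hβ0, hβ1⟩ := hβ
  -- the critical set is nonempty
  have hcrit_ne : (Crit ψ).Nonempty := by
    obtain ⟨c, _, hc⟩ := exists_deriv_eq_zero (f := ψ) zero_lt_one
      hC2.continuous.continuousOn (by simpa using (hper 0).symm)
    exact ⟨c, hc⟩
  have hcrit0 : ∃ c₀, c₀ ∈ Crit ψ ∩ Ico (0:ℝ) 1 := by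
    obtain ⟨c, hc⟩ := hcrit_ne
    refine ⟨c + (-⌊c⌋ : ℤ), crit_shift ψ hper c hc _, ?_, ?_⟩
    · push_cast
      linarith [Int.floor_le c]
    · push_cast
      linarith [Int.lt_floor_add_one c]
  -- finiteness of the critical set in a window
  have hTfin : (Crit ψ ∩ Icc (-2:ℝ) 3).Finite := by
    have hsub : Crit ψ ∩ Icc (-2:ℝ) 3 ⊆
        ⋃ n ∈ Finset.Icc (-2:ℤ) 3, (fun y => y + (n:ℝ)) '' (Crit ψ ∩ Ico 0 1) := by
      rintro x ⟨hx1, hx2, hx3⟩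
      have hn : ⌊x⌋ ∈ Finset.Icc (-2:ℤ) 3 := by
        simp only [Finset.mem_Icc]
        constructor
        · exact Int.le_floor.mpr (by exact_mod_cast hx2)
        · exact_mod_cast ((Int.floor_le x).trans hx3).trans (by norm_num : (3:ℝ) ≤ (3:ℤ))
      refine Set.mem_biUnion hn ⟨x + (-⌊x⌋ : ℤ), ⟨crit_shift ψ hper x hx1 _, ?_, ?_⟩, by push_cast; ring⟩
      · push_cast
        linarith [Int.floor_le x]
      · push_cast
        linarith [Int.lt_floor_add_one x]
    exact (Set.Finite.biUnion (Finset.Icc (-2:ℤ) 3).finite_toSet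
      (fun n _ => hH1.image _)).subset hsub
  set T := Crit ψ ∩ Icc (-2:ℝ) 3 with hT
  set P : Set ℝ := {d | ∃ x ∈ T, ∃ y ∈ T, x ≠ y ∧ d = |x - y|} with hP
  have hPfin : P.Finite := by
    have hsub : P ⊆ Set.image2 (fun x y => |x - y|) T T := by
      rintro d ⟨x, hx, y, hy, _, rfl⟩
      exact Set.mem_image2_of_mem hx hy
    exact (hTfin.image2 _ hTfin).subset hsub
  obtain ⟨c₀, hc₀⟩ := hcrit0
  have hc₀T : c₀ ∈ T := ⟨hc₀.1, by constructor <;> [linarith [hc₀.2.1]; linarith [hc₀.2.2]]⟩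
  have hc₀1T : c₀ + 1 ∈ T := by
    refine ⟨by simpa using crit_shift ψ hper c₀ hc₀.1 1, ?_, ?_⟩
    · linarith [hc₀.2.1]
    · linarith [hc₀.2.2]
  have h1P : (1:ℝ) ∈ P := ⟨c₀, hc₀T, c₀ + 1, hc₀1T, by intro hE; linarith [congrArg id hE], by
    rw [show c₀ - (c₀ + 1) = -1 by ring]; simp⟩
  have hPne : P.Nonempty := ⟨1, h1P⟩
  set δ := sInf P with hδ
  have hδmem : δ ∈ P := hPne.csInf_mem hPfin
  have hδpos : 0 < δ := by
    obtain ⟨x, hx, y, hy, hne, hd⟩ := hδmem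
    rw [hd]
    exact abs_pos.mpr (sub_ne_zero.mpr hne)
  have hδ1 : δ ≤ 1 := csInf_le hPfin.bddBelow h1P
  -- separation of distinct critical points at distance ≤ 1
  have hsep : ∀ x ∈ Crit ψ, ∀ y ∈ Crit ψ, x ≠ y → |x - y| ≤ 1 → δ ≤ |x - y| := by
    intro x hx y hy hne hd
    have hx' : x + (-⌊x⌋ : ℤ) ∈ T := by
      refine ⟨crit_shift ψ hper x hx _, ?_, ?_⟩
      · push_cast; linarith [Int.floor_le x]
      · push_cast; linarith [Int.lt_floor_add_one x]
    have habs := abs_le.mp hd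
    have hy' : y + (-⌊x⌋ : ℤ) ∈ T := by
      refine ⟨crit_shift ψ hper y hy _, ?_, ?_⟩
      · push_cast; linarith [Int.floor_le x, habs.1, habs.2]
      · push_cast; linarith [Int.lt_floor_add_one x, habs.1, habs.2]
    have hne' : x + (-⌊x⌋ : ℤ) ≠ y + (-⌊x⌋ : ℤ) := by
      intro hE
      exact hne (by linarith [add_right_cancel hE])
    have hmem : |x - y| ∈ P := ⟨x + (-⌊x⌋ : ℤ), hx', y + (-⌊x⌋ : ℤ), hy', hne', by
      rw [show x + (-⌊x⌋ : ℤ) - (y + (-⌊x⌋ : ℤ)) = x - y by push_cast; ring]⟩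
    exact csInf_le hPfin.bddBelow hmem
  -- dS1Set facts
  have hdS1_mem : ∀ z a, a ∈ Crit ψ → ∃ a' ∈ Crit ψ, dS1 z a = |z - a'| := by
    intro z a ha
    refine ⟨a + (round (z - a) : ℤ), crit_shift ψ hper a ha _, ?_⟩
    unfold dS1
    congr 1
    push_cast
    ring
  have hbdd : ∀ z : ℝ, BddBelow (dS1 z '' Crit ψ) := by
    intro z
    refine ⟨0, ?_⟩
    rintro d ⟨a, _, rfl⟩
    exact abs_nonneg _
  have himg_ne : ∀ z : ℝ, (dS1 z '' Crit ψ).Nonempty := fun z => hcrit_ne.image _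
  have fact3 : ∀ z c, c ∈ Crit ψ → (∀ a ∈ Crit ψ, |z - c| ≤ |z - a|) →
      |z - c| ≤ dS1Set z (Crit ψ) := by
    intro z c hc hall
    unfold dS1Set
    refine le_csInf (himg_ne z) ?_
    rintro d ⟨a, ha, rfl⟩
    obtain ⟨a', ha', he⟩ := hdS1_mem z a ha
    rw [he]
    exact hall a' ha'
  have fact4 : ∀ z r, 0 < r → dS1Set z (Crit ψ) ≤ r → ∃ c ∈ Crit ψ, |z - c| < 2 * r := by
    intro z r hr hle
    unfold dS1Set at hle
    have hlt : sInf (dS1 z '' Crit ψ) < 2 * r := lt_of_le_of_lt hle (by linarith)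
    obtain ⟨d, ⟨a, ha, rfl⟩, hdlt⟩ := (csInf_lt_iff (hbdd z) (himg_ne z)).mp hlt
    obtain ⟨a', ha', he⟩ := hdS1_mem z a ha
    exact ⟨a', ha', he ▸ hdlt⟩
  -- the threshold
  refine ⟨max (max 10 ((11 / (K₁ * δ))^2)) (Real.exp ((1 + Real.log 2 - Real.log K₁) / β)),
    lt_of_lt_of_le (by norm_num : (0:ℝ) < 10) ((le_max_left _ _).trans (le_max_left _ _)), ?_⟩
  intro L hL I hIconn hIsub
  have hL10 : (10:ℝ) ≤ L := ((le_max_left _ _).trans (le_max_left _ _)).trans hL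
  have hL1 : (1:ℝ) ≤ L := by linarith
  have hLpos : (0:ℝ) < L := by linarith
  set r : ℝ := K₁⁻¹ * L ^ (-(1:ℝ)/2 - β) with hr
  have hrpos : 0 < r := mul_pos (inv_pos.mpr hK1pos) (Real.rpow_pos_of_pos hLpos _)
  have hrδ : 11 * r ≤ δ := by
    have h1 : L ^ (-(1:ℝ)/2 - β) ≤ L ^ (-(1:ℝ)/2) :=
      Real.rpow_le_rpow_of_exponent_le hL1 (by linarith)
    have h2 : L ^ (-(1:ℝ)/2) = (Real.sqrt L)⁻¹ := by
      rw [show (-(1:ℝ)/2) = -(1/2) by norm_num, Real.rpow_neg hLpos.le, Real.sqrt_eq_rpow]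
    have h3 : 11 / (K₁ * δ) ≤ Real.sqrt L := by
      have h4 : ((11 / (K₁ * δ))^2) ≤ L := ((le_max_right _ _).trans (le_max_left _ _)).trans hL
      calc 11 / (K₁ * δ) = Real.sqrt ((11 / (K₁ * δ))^2) := (Real.sqrt_sq (by positivity)).symm
        _ ≤ Real.sqrt L := Real.sqrt_le_sqrt h4
    have h5 : (Real.sqrt L)⁻¹ ≤ K₁ * δ / 11 := by
      have h6 := one_div_le_one_div_of_le (by positivity : (0:ℝ) < 11 / (K₁ * δ)) h3
      rw [one_div_div] at h6
      simpa [one_div] using h6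
    have h7 : r ≤ K₁⁻¹ * (K₁ * δ / 11) := by
      rw [hr]
      apply mul_le_mul_of_nonneg_left _ (by positivity)
      rw [h2] at h1
      exact h1.trans h5
    have h8 : K₁⁻¹ * (K₁ * δ / 11) = δ / 11 := by
      field_simp
    rw [h8] at h7
    linarith
  have hlogL : 1 + Real.log 2 ≤ β * Real.log L + Real.log K₁ := by
    have h1 : Real.exp ((1 + Real.log 2 - Real.log K₁) / β) ≤ L := (le_max_right _ _).trans hL
    have h2 : (1 + Real.log 2 - Real.log K₁) / β ≤ Real.log L :=
      (Real.le_log_iff_exp_le hLpos).mpr h1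
    have h3 := (div_le_iff₀ hβ0).mp h2
    nlinarith
  -- geometry of I
  obtain ⟨z₀, hz₀I⟩ := hIconn.nonempty
  have hBmem : ∀ z ∈ I, dS1Set z (Crit ψ) ≤ r := by
    intro z hz
    have := hIsub hz
    simpa [Bset, Set.mem_setOf_eq, hr] using this
  obtain ⟨c, hcCrit, hz₀c⟩ := fact4 z₀ r hrpos (hBmem z₀ hz₀I)
  have claimA : ∀ z ∈ I, |z - c| ≤ 4 * r := by
    intro z hz
    by_contra hcon
    push_neg at hcon
    set t := min (|z - c|) (8 * r) with ht
    have ht1 : 4 * r < t := lt_min (by linarith) (by linarith)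
    have ht2 : t ≤ 8 * r := min_le_right _ _
    have himg : ((fun y => |y - c|) '' I).OrdConnected :=
      (hIconn.isPreconnected.image _
        ((continuous_id.sub continuous_const).abs.continuousOn)).ordConnected
    have hmem : t ∈ (fun y => |y - c|) '' I := by
      have h1 : |z₀ - c| ∈ (fun y => |y - c|) '' I := Set.mem_image_of_mem _ hz₀I
      have h2 : |z - c| ∈ (fun y => |y - c|) '' I := Set.mem_image_of_mem _ hz
      exact himg.out h1 h2 ⟨by
        have : |z₀ - c| < 2 * r := hz₀c
        linarith, min_le_left _ _⟩
    obtain ⟨z₂, hz₂I, hz₂c⟩ := hmem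
    simp only [] at hz₂c
    obtain ⟨c', hc'Crit, hz₂c'⟩ := fact4 z₂ r hrpos (hBmem z₂ hz₂I)
    have hcc' : c ≠ c' := by
      intro hE
      rw [← hE] at hz₂c'
      rw [hz₂c] at hz₂c'
      linarith
    have hdist : |c - c'| ≤ 10 * r := by
      have htri : |c - c'| ≤ |c - z₂| + |z₂ - c'| := abs_sub_le c z₂ c'
      rw [abs_sub_comm c z₂, hz₂c] at htri
      linarith
    have hle1 : |c - c'| ≤ 1 := by linarith
    have := hsep c hcCrit c' hc'Crit hcc' hle1
    linarith
  have claimB : ∀ z ∈ I, K₁ * |z - c| ≤ |deriv ψ z| := by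
    intro z hz
    have h1 : |z - c| ≤ dS1Set z (Crit ψ) := by
      refine fact3 z c hcCrit ?_
      intro a ha
      rcases eq_or_ne a c with rfl | hac
      · exact le_rfl
      · have hza : |z - c| ≤ 4 * r := claimA z hz
        have htri : |c - a| ≤ |c - z| + |z - a| := abs_sub_le c z a
        rw [abs_sub_comm c z] at htri
        rcases le_or_gt (|c - a|) 1 with hca | hca
        · have hd := hsep c hcCrit a ha (Ne.symm hac) hca
          linarith
        · linarith
    calc K₁ * |z - c| ≤ K₁ * dS1Set z (Crit ψ) := mul_le_mul_of_nonneg_left h1 hK1pos.le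
      _ ≤ |deriv ψ z| := hK1le z
  have hIbl : BddBelow I := by
    refine ⟨c - 4*r, fun z hz => ?_⟩
    obtain ⟨h1, h2⟩ := abs_le.mp (claimA z hz)
    linarith
  have hIba : BddAbove I := by
    refine ⟨c + 4*r, fun z hz => ?_⟩
    obtain ⟨h1, h2⟩ := abs_le.mp (claimA z hz)
    linarith
  set u := sInf I with hu
  set v := sSup I with hv
  have hIcc : I ⊆ Icc u v := fun z hz => ⟨csInf_le hIbl hz, le_csSup hIba hz⟩
  by_cases hvol0 : volume I = 0
  · have hs0 : sLen I = 0 := by rw [sLen, hvol0]; simp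
    rw [hs0]
    rw [Measure.restrict_eq_zero.mpr hvol0]
    simp
  · have huv : u < v := by
      by_contra hle
      push_neg at hle
      apply hvol0
      have h1 : volume I ≤ volume (Icc u v) := measure_mono hIcc
      rw [Real.volume_Icc, ENNReal.ofReal_eq_zero.mpr (by linarith : v - u ≤ 0)] at h1
      exact le_antisymm h1 zero_le
    have hIoo : Ioo u v ⊆ I := by
      intro x hx
      obtain ⟨a, haI, hax⟩ := (csInf_lt_iff hIbl ⟨z₀, hz₀I⟩).mp hx.1
      obtain ⟨b, hbI, hxb⟩ := (lt_csSup_iff hIba ⟨z₀, hz₀I⟩).mp hx.2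
      exact hIconn.isPreconnected.ordConnected.out haI hbI ⟨hax.le, hxb.le⟩
    have hvolI : volume I = ENNReal.ofReal (v - u) := by
      apply le_antisymm
      · rw [← Real.volume_Icc (a := u) (b := v)]
        exact measure_mono hIcc
      · rw [← Real.volume_Ioo (a := u) (b := v)]
        exact measure_mono hIoo
    have hslen : sLen I = v - u := by
      rw [sLen, hvolI, ENNReal.toReal_ofReal (by linarith)]
    have hhpos : (0:ℝ) < v - u := by linarith
    have hae : I =ᵐ[volume] Ioo u v := by
      refine MeasureTheory.ae_eq_set.mpr ⟨?_, ?_⟩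
      · refine measure_mono_null (?_ : I \ Ioo u v ⊆ {u, v}) ?_
        · intro x hx
          have h1 := hIcc hx.1
          have h2 := hx.2
          simp only [mem_Ioo, not_and_or, not_lt] at h2
          rcases h2 with h2 | h2
          · exact Or.inl (le_antisymm h2 h1.1)
          · exact Or.inr (le_antisymm h1.2 h2)
        · exact ((Set.finite_singleton v).insert u).measure_zero _
      · rw [Set.diff_eq_empty.mpr hIoo]
        simp
    have hrestr : volume.restrict I = volume.restrict (Ioo u v) :=
      Measure.restrict_congr_set hae
    have hLK : 0 < L * K₁ := mul_pos hLpos hK1pos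
    set φ : ℝ → ℝ := fun z => Real.log (L * K₁) + Real.log (z - c) with hφ
    have hlogshift : IntervalIntegrable (fun z => Real.log (z - c)) volume u v := by
      have h1 := (intervalIntegrable_log' (u - c) (v - c)).comp_sub_right c
      simpa using h1
    have hφII : IntervalIntegrable φ volume u v :=
      intervalIntegrable_const.add hlogshift
    have hφint : IntegrableOn φ (Ioo u v) :=
      (intervalIntegrable_iff_integrableOn_Ioo_of_le huv.le).mp hφII
    have hfmeas : AEStronglyMeasurable (fun z => Real.log |L * deriv ψ z|)
        (volume.restrict (Ioo u v)) := by
      have hcd : Continuous (deriv ψ) := hC2.continuous_deriv one_le_two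
      exact (Real.measurable_log.comp
        ((continuous_const.mul hcd).abs.measurable)).aestronglyMeasurable
    have hφle : ∀ᵐ z ∂(volume.restrict (Ioo u v)), φ z ≤ Real.log |L * deriv ψ z| := by
      have hc0 : (volume.restrict (Ioo u v)) {c} = 0 := by
        rw [Measure.restrict_apply (measurableSet_singleton c)]
        exact measure_mono_null Set.inter_subset_left Real.volume_singleton
      have hcae : ∀ᵐ z ∂(volume.restrict (Ioo u v)), z ≠ c := by
        rw [MeasureTheory.ae_iff]
        convert hc0 using 2
        ext z
        simp
      filter_upwards [ae_restrict_mem measurableSet_Ioo, hcae] with z hzmem hzc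
      have hzI : z ∈ I := hIoo hzmem
      have h1 : 0 < |z - c| := abs_pos.mpr (sub_ne_zero.mpr hzc)
      have h2 : L * K₁ * |z - c| ≤ |L * deriv ψ z| := by
        rw [abs_mul, abs_of_pos hLpos]
        calc L * K₁ * |z - c| = L * (K₁ * |z - c|) := by ring
          _ ≤ L * |deriv ψ z| := mul_le_mul_of_nonneg_left (claimB z hzI) hLpos.le
      have h3 : Real.log (L * K₁ * |z - c|) ≤ Real.log |L * deriv ψ z| :=
        (Real.log_le_log_iff (by positivity) (lt_of_lt_of_le (by positivity) h2)).mpr h2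
      have h4 : Real.log (L * K₁ * |z - c|) = Real.log (L * K₁) + Real.log (z - c) := by
        rw [Real.log_mul (ne_of_gt hLK) (ne_of_gt h1), Real.log_abs]
      show Real.log (L * K₁) + Real.log (z - c) ≤ Real.log |L * deriv ψ z|
      linarith
    have hfint : IntegrableOn (fun z => Real.log |L * deriv ψ z|) (Ioo u v) := by
      set M := Real.log (L / 10) with hM
      have hMnn : 0 ≤ M := Real.log_nonneg (by linarith)
      have hub : ∀ z : ℝ, Real.log |L * deriv ψ z| ≤ M := by
        intro z
        have hb : |L * deriv ψ z| ≤ L / 10 := by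
          rw [abs_mul, abs_of_pos hLpos]
          have := mul_le_mul_of_nonneg_left (hH4.1 z) hLpos.le
          linarith
        rcases eq_or_lt_of_le (abs_nonneg (L * deriv ψ z)) with h0 | h0
        · rw [← h0]
          simpa using hMnn
        · exact (Real.log_le_log_iff h0 (by linarith)).mpr hb
      have hconst : IntegrableOn (fun _ : ℝ => M) (Ioo u v) volume := by
        refine (integrableOn_const_iff (by simp)).mpr (Or.inr ?_)
        rw [Real.volume_Ioo]
        exact ENNReal.ofReal_lt_top
      refine Integrable.mono' (hφint.norm.add hconst) hfmeas ?_
      · filter_upwards [hφle] with z hz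
        simp only [Pi.add_apply]
        rw [Real.norm_eq_abs, abs_le]
        constructor
        · have h1 := neg_abs_le (φ z)
          have h2 : |φ z| = ‖φ z‖ := (Real.norm_eq_abs _).symm
          rw [h2] at h1
          linarith [hub z]
        · have h1 := norm_nonneg (φ z)
          linarith [hub z]
    have hcmp : ∫ z in Ioo u v, φ z ≤ ∫ z in Ioo u v, Real.log |L * deriv ψ z| :=
      integral_mono_ae hφint hfint hφle
    have hIeq : ∫ z in I, Real.log |L * deriv ψ z| = ∫ z in Ioo u v, Real.log |L * deriv ψ z| := by
      rw [show (volume : Measure ℝ).restrict I = volume.restrict (Ioo u v) from hrestr]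
    have hφeval : ∫ z in Ioo u v, φ z
        = (v - u) * Real.log (L * K₁) + (Flog (v - c) - Flog (u - c)) := by
      have h1 : ∫ z in Ioo u v, φ z = ∫ z in u..v, φ z := by
        rw [intervalIntegral.integral_of_le huv.le, MeasureTheory.integral_Ioc_eq_integral_Ioo]
      rw [h1, hφ]
      rw [intervalIntegral.integral_add intervalIntegrable_const hlogshift]
      rw [intervalIntegral.integral_const]
      have h2 : (∫ z in u..v, Real.log (z - c)) = ∫ t in (u - c)..(v - c), Real.log t :=
        intervalIntegral.integral_comp_sub_right (fun t => Real.log t) c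
      rw [h2, integral_log_eq (u - c) (v - c) (by linarith)]
      simp [smul_eq_mul]
    have hFge : (v - u) * Real.log ((v - u) / 2) - (v - u) ≤ Flog (v - c) - Flog (u - c) := by
      have hfd := Flog_diff_ge hhpos (u - c)
      have he : (u - c) + (v - u) = v - c := by ring
      rwa [he] at hfd
    rw [hslen, hIeq]
    have hlg1 : Real.log (L ^ ((1:ℝ) - β) * (v - u))
        = (1 - β) * Real.log L + Real.log (v - u) := by
      rw [Real.log_mul (ne_of_gt (Real.rpow_pos_of_pos hLpos _)) (ne_of_gt hhpos),
        Real.log_rpow hLpos]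
    have hlg2 : Real.log (L * K₁) = Real.log L + Real.log K₁ :=
      Real.log_mul (ne_of_gt hLpos) (ne_of_gt hK1pos)
    have hlg3 : Real.log ((v - u) / 2) = Real.log (v - u) - Real.log 2 :=
      Real.log_div (ne_of_gt hhpos) (by norm_num)
    have hkey : (0:ℝ) ≤ (v - u) * (β * Real.log L + Real.log K₁ - Real.log 2 - 1) :=
      mul_nonneg hhpos.le (by linarith)
    calc (v - u) * Real.log (L ^ ((1:ℝ) - β) * (v - u))
        = (v - u) * ((1 - β) * Real.log L + Real.log (v - u)) := by rw [hlg1]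
      _ ≤ (v - u) * Real.log (L * K₁) + ((v - u) * Real.log ((v - u) / 2) - (v - u)) := by
          rw [hlg2, hlg3]; nlinarith [hkey]
      _ ≤ (v - u) * Real.log (L * K₁) + (Flog (v - c) - Flog (u - c)) := by linarith
      _ = ∫ z in Ioo u v, φ z := hφeval.symm
      _ ≤ ∫ z in Ioo u v, Real.log |L * deriv ψ z| := hcmp
end
end

section
/- Let ψ : S¹ → ℝ be C² with finite critical set C'_ψ = {x : ψ'(x) = 0}, let L > 0, a ∈ [0,1), f := Lψ + a (mod 1), and let ε > 0. Then every stationary probability measure μ of the Markov kernel P(x, A) := ν^ε{ω ∈ [−ε,ε] : f(x + ω) ∈ A} is absolutely continuous with respect to Lebesgue measure on S¹. -/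
open MeasureTheory Set Filter Topology

noncomputable section

/-- A stationary probability measure for the Markov chain `X_{n+1} = f(X_n + ω_n)` on
`S¹ ≅ [0,1)`. -/
def IsStationaryCirc (ψ : ℝ → ℝ) (L a ε : ℝ) (μ : Measure ℝ) : Prop :=
  IsProbabilityMeasure μ ∧ μ (Ico (0:ℝ) 1) = 1 ∧
    ∀ A : Set ℝ, MeasurableSet A →
      μ A = ∫⁻ x, unif ε {w : ℝ | cmap ψ L a (x + w) ∈ A} ∂μ

/-! ## Auxiliary lemmas for the proof of absolute continuity. -/

lemma aux_crit_countable (ψ : ℝ → ℝ) (hper : Function.Periodic ψ 1) (h1 : H1 ψ) :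
    (Crit ψ).Countable := by
  have hd : Function.Periodic (deriv ψ) 1 := by
    intro x
    have hfun : (fun y : ℝ => ψ (y + 1)) = ψ := funext fun y => hper y
    calc deriv ψ (x + 1) = deriv (fun y : ℝ => ψ (y + 1)) x := (deriv_comp_add_const ψ 1 x).symm
      _ = deriv ψ x := by rw [hfun]
  have hsub : Crit ψ ⊆ ⋃ n : ℤ, (fun t : ℝ => t + n) '' (Crit ψ ∩ Ico 0 1) := by
    intro y hy
    refine mem_iUnion.2 ⟨⌊y⌋, ⟨y - ⌊y⌋, ⟨?_, ?_, ?_⟩, by ring⟩⟩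
    · show deriv ψ (y - (⌊y⌋ : ℝ)) = 0
      have h := (hd.int_mul ⌊y⌋).sub_eq (x := y)
      rw [mul_one] at h
      rw [h]; exact hy
    · exact Int.fract_nonneg y
    · exact Int.fract_lt_one y
  exact Set.Countable.mono hsub
    (countable_iUnion fun n => (h1.countable).image _)

lemma aux_fract_preimage_null {A : Set ℝ} (hA : volume A = 0) :
    volume (Int.fract ⁻¹' A) = 0 := by
  have hsub : Int.fract ⁻¹' A ⊆ ⋃ n : ℤ, (fun y : ℝ => y - (n : ℝ)) ⁻¹' A := by
    intro y hy
    exact mem_iUnion.2 ⟨⌊y⌋, hy⟩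
  refine measure_mono_null hsub (measure_iUnion_null fun n => ?_)
  have : (fun y : ℝ => y - (n : ℝ)) = (fun y : ℝ => y + (-(n : ℝ))) := funext fun y => by ring
  rw [this, measure_preimage_add_right]
  exact hA

/-- Key lemma: the map `w ↦ L ψ(x+w) + a` pulls back measurable null sets to null sets. -/
lemma aux_preimage_null (ψ : ℝ → ℝ) (hper : Function.Periodic ψ 1) (hsm : ContDiff ℝ 2 ψ)
    (h1 : H1 ψ) (L x a : ℝ) (hL : 0 < L) {N : Set ℝ} (hNm : MeasurableSet N)
    (hN : volume N = 0) : volume {w : ℝ | L * ψ (x + w) + a ∈ N} = 0 := by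
  set g : ℝ → ℝ := fun w => L * ψ (x + w) + a with hg_def
  have hψd : Differentiable ℝ ψ := hsm.differentiable (by norm_num)
  have hg : ∀ w : ℝ, HasDerivAt g (L * deriv ψ (x + w)) w := by
    intro w
    have h0 : HasDerivAt (fun w : ℝ => ψ (x + w)) (deriv ψ (x + w) * 1) w :=
      HasDerivAt.comp w (hψd (x + w)).hasDerivAt ((hasDerivAt_id w).const_add x)
    have := (h0.const_mul L).add_const a
    rw [mul_one] at this; exact this
  have hψc : Continuous ψ := hsm.continuous
  have hgc : Continuous g := by fun_prop
  have hdψ : Continuous (deriv ψ) := hsm.continuous_deriv (by norm_num)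
  have hdc : Continuous fun u : ℝ => L * deriv ψ (x + u) := by fun_prop
  set Z : Set ℝ := {w : ℝ | deriv ψ (x + w) = 0} with hZ_def
  have hZc : Z.Countable := by
    have : Z = (fun w : ℝ => x + w) ⁻¹' Crit ψ := rfl
    rw [this]
    exact (aux_crit_countable ψ hper h1).preimage (add_right_injective x)
  set s : Set ℝ := {w : ℝ | g w ∈ N} ∩ Zᶜ with hs_def
  have hsplit : {w : ℝ | g w ∈ N} ⊆ s ∪ Z := by
    intro w hw
    by_cases h : w ∈ Z
    · exact Or.inr h
    · exact Or.inl ⟨hw, h⟩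
  refine measure_mono_null hsplit (measure_union_null ?_ (hZc.measure_zero _))
  refine measure_null_of_locally_null s fun w hw => ?_
  obtain ⟨hwN, hwZ⟩ := hw
  set c : ℝ := L * |deriv ψ (x + w)| / 2 with hc_def
  have hc : 0 < c := by
    have : deriv ψ (x + w) ≠ 0 := hwZ
    have habs : 0 < |deriv ψ (x + w)| := abs_pos.2 this
    positivity
  -- find δ with |g'| > c on Icc (w-δ) (w+δ)
  have hopen : IsOpen {u : ℝ | c < |L * deriv ψ (x + u)|} :=
    isOpen_lt continuous_const hdc.abs
  have hwmem : w ∈ {u : ℝ | c < |L * deriv ψ (x + u)|} := by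
    show c < |L * deriv ψ (x + w)|
    rw [abs_mul, abs_of_pos hL, hc_def]
    have : 0 < L * |deriv ψ (x + w)| := by
      have : deriv ψ (x + w) ≠ 0 := hwZ
      have := abs_pos.2 this
      positivity
    linarith
  obtain ⟨r, hr, hball⟩ := Metric.isOpen_iff.1 hopen w hwmem
  set δ : ℝ := r / 2 with hδ_def
  have hδ : 0 < δ := by positivity
  have hIcc : Icc (w - δ) (w + δ) ⊆ {u : ℝ | c < |L * deriv ψ (x + u)|} := by
    intro u hu
    apply hball
    rw [Metric.mem_ball, Real.dist_eq]
    have h1 : w - δ ≤ u := hu.1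
    have h2 : u ≤ w + δ := hu.2
    rw [abs_sub_lt_iff]
    constructor <;> linarith
  -- anti-Lipschitz estimate via MVT
  have hkey : ∀ y ∈ Icc (w - δ) (w + δ), ∀ z ∈ Icc (w - δ) (w + δ), y < z →
      c * (z - y) ≤ |g z - g y| := by
    intro y hy z hz hyz
    obtain ⟨ξ, hξ, hslope⟩ := exists_hasDerivAt_eq_slope g (fun u => L * deriv ψ (x + u)) hyz
      (hgc.continuousOn) (fun u _ => hg u)
    have hξIcc : ξ ∈ Icc (w - δ) (w + δ) :=
      ⟨le_trans hy.1 hξ.1.le, le_trans hξ.2.le hz.2⟩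
    have hcξ : c < |L * deriv ψ (x + ξ)| := hIcc hξIcc
    have hzy : 0 < z - y := by linarith
    have : |g z - g y| = |L * deriv ψ (x + ξ)| * (z - y) := by
      rw [hslope]
      rw [abs_div, abs_of_pos hzy, div_mul_cancel₀]
      exact hzy.ne'
    rw [this]
    exact mul_le_mul_of_nonneg_right hcξ.le hzy.le
  set S : Set ℝ := {u : ℝ | g u ∈ N} ∩ Icc (w - δ) (w + δ) with hS_def
  have hSm : MeasurableSet S :=
    (hgc.measurable hNm).inter measurableSet_Icc
  have hinj : InjOn g S := by
    intro y hy z hz hgyz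
    by_contra hne
    rcases lt_or_gt_of_ne hne with h | h
    · have := hkey y hy.2 z hz.2 h
      rw [hgyz, sub_self, abs_zero] at this
      nlinarith
    · have := hkey z hz.2 y hy.2 h
      rw [hgyz, sub_self, abs_zero] at this
      nlinarith
  have hfd : ∀ u ∈ S, HasFDerivWithinAt g
      ((1 : ℝ →L[ℝ] ℝ).smulRight (L * deriv ψ (x + u))) S u :=
    fun u _ => (hg u).hasFDerivAt.hasFDerivWithinAt
  have hle : (∫⁻ u in S, ENNReal.ofReal |L * deriv ψ (x + u)| ∂volume) ≤ volume (g '' S) := by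
    have := lintegral_abs_det_fderiv_le_addHaar_image volume hSm hfd hinj
    simpa [ContinuousLinearMap.smulRight_one_eq_toSpanSingleton, ContinuousLinearMap.det_toSpanSingleton] using this
  have himg : volume (g '' S) = 0 := by
    refine measure_mono_null ?_ hN
    rintro _ ⟨u, hu, rfl⟩
    exact hu.1
  have hlower : ENNReal.ofReal c * volume S ≤
      ∫⁻ u in S, ENNReal.ofReal |L * deriv ψ (x + u)| ∂volume := by
    rw [← setLIntegral_const S (ENNReal.ofReal c)]
    refine setLIntegral_mono (ENNReal.measurable_ofReal.comp hdc.abs.measurable) ?_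
    intro u hu
    exact ENNReal.ofReal_le_ofReal (hIcc hu.2).le
  have hS0 : volume S = 0 := by
    have : ENNReal.ofReal c * volume S = 0 :=
      le_antisymm (by calc ENNReal.ofReal c * volume S ≤ _ := hlower
                      _ ≤ volume (g '' S) := hle
                      _ = 0 := himg) zero_le
    rcases mul_eq_zero.1 this with h | h
    · exact absurd h (by simp [ENNReal.ofReal_eq_zero, not_le, hc])
    · exact h
  refine ⟨s ∩ Icc (w - δ) (w + δ), ?_, ?_⟩
  · exact inter_mem_nhdsWithin s (Icc_mem_nhds (by linarith) (by linarith))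
  · refine measure_mono_null ?_ hS0
    intro u hu
    exact ⟨hu.1.1, hu.2⟩
/-- Every stationary measure of the randomly perturbed system is absolutely continuous with
respect to Lebesgue measure (Section 3.2). -/

theorem stationary_ac (ψ : ℝ → ℝ) (hper : Function.Periodic ψ 1) (hsm : ContDiff ℝ 2 ψ)
    (h1 : H1 ψ) (L a ε : ℝ) (hL : 0 < L) (ha : a ∈ Ico (0:ℝ) 1) (hε : 0 < ε)
    (μ : Measure ℝ) (hμ : IsStationaryCirc ψ L a ε μ) :
    μ ≪ volume := by
  obtain ⟨hprob, hIco, hstat⟩ := hμ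
  intro t ht
  set A : Set ℝ := toMeasurable volume t with hA_def
  have hAm : MeasurableSet A := measurableSet_toMeasurable _ _
  have hA0 : volume A = 0 := by
    rw [hA_def, measure_toMeasurable]; exact ht
  have key : ∀ x : ℝ, unif ε {w : ℝ | cmap ψ L a (x + w) ∈ A} = 0 := by
    intro x
    have hvol : volume {w : ℝ | cmap ψ L a (x + w) ∈ A} = 0 := by
      have heq : {w : ℝ | cmap ψ L a (x + w) ∈ A} =
          {w : ℝ | L * ψ (x + w) + a ∈ Int.fract ⁻¹' A} := rfl
      rw [heq]
      exact aux_preimage_null ψ hper hsm h1 L x a hL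
        (measurable_fract hAm) (aux_fract_preimage_null hA0)
    have hres : (volume.restrict (Icc (-ε) ε)) {w : ℝ | cmap ψ L a (x + w) ∈ A} = 0 :=
      le_antisymm (le_trans (Measure.restrict_apply_le _ _) hvol.le) zero_le
    show (ENNReal.ofReal (1 / (2 * ε)) • volume.restrict (Icc (-ε) ε))
        {w : ℝ | cmap ψ L a (x + w) ∈ A} = 0
    rw [Measure.smul_apply, smul_eq_mul, hres, mul_zero]
  have hμA : μ A = 0 := by
    rw [hstat A hAm]
    simp only [key]
    exact lintegral_zero
  exact measure_mono_null (subset_toMeasurable volume t) hμA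
end
end
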